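/- The series value at x = 1 is B(1) = 4/π, i.e., ∑_{n=0}^∞ ((1/(2n−1))·(1/4ⁿ)·C(2n,n))² = 4/π. -/

import Mathlib

open Real Filter Finset Topology

noncomputable def cb (n : ℕ) : ℝ := (Nat.choose (2 * n) n : ℝ) / 4 ^ n

lemma cb_pos (n : ℕ) : 0 < cb n := by
  apply div_pos
  · exact_mod_cast Nat.choose_pos (by omega)
  · positivity

lemma cb_succ (n : ℕ) : cb (n + 1) = cb n * (2 * n + 1) / (2 * n + 2) := by
  have h := Nat.succ_mul_centralBinom_succ n
  rw [Nat.centralBinom_eq_two_mul_choose, Nat.centralBinom_eq_two_mul_choose] at h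
  have h' : ((n:ℝ) + 1) * ((2 * (n+1)).choose (n+1) : ℝ)
      = 2 * (2 * (n:ℝ) + 1) * ((2 * n).choose n : ℝ) := by exact_mod_cast h
  simp only [cb]
  set X := ((2 * (n+1)).choose (n+1) : ℝ)
  set Y := ((2 * n).choose n : ℝ)
  rw [pow_succ]
  have h4 : (4:ℝ) ^ n ≠ 0 := by positivity
  have hn : (2 * (n:ℝ) + 2) ≠ 0 := by positivity
  field_simp
  linear_combination 2 * h'

lemma term_eq (n : ℕ) :
    ((1 / (2 * (n : ℝ) - 1)) * (1 / 4 ^ n) * (Nat.choose (2 * n) n)) ^ 2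
      = (cb n) ^ 2 / (2 * (n:ℝ) - 1) ^ 2 := by
  have h : (1 / (2 * (n : ℝ) - 1)) * (1 / 4 ^ n) * (Nat.choose (2 * n) n : ℝ)
      = cb n / (2 * (n:ℝ) - 1) := by simp only [cb]; ring
  rw [h, div_pow]

lemma partial_sum (N : ℕ) :
    ∑ n ∈ range (N + 1), ((1 / (2 * (n : ℝ) - 1)) * (1 / 4 ^ n) * (Nat.choose (2 * n) n)) ^ 2
      = (4 * N + 1) * (cb N) ^ 2 := by
  induction N with
  | zero => simp [cb]
  | succ N ih =>
    rw [Finset.sum_range_succ, ih, term_eq, cb_succ]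
    have h1 : (2 * ((N:ℝ)+1) - 1) = 2 * (N:ℝ) + 1 := by push_cast; ring
    push_cast
    rw [h1]
    have h2 : (2 * (N:ℝ) + 1) ≠ 0 := by positivity
    have h3 : (2 * (N:ℝ) + 2) ≠ 0 := by positivity
    field_simp
    ring

lemma wallis_inv (k : ℕ) :
    (∏ i ∈ range k, ((2 : ℝ) * i + 2) / (2 * i + 1) * ((2 * i + 2) / (2 * i + 3)))
      * ((2 * k + 1) * (cb k) ^ 2) = 1 := by
  induction k with
  | zero => simp [cb]
  | succ k ih =>
    rw [Finset.prod_range_succ]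
    have h1 : (2 * (k:ℝ) + 1) ≠ 0 := by positivity
    have h2 : (2 * (k:ℝ) + 2) ≠ 0 := by positivity
    have h3 : (2 * (k:ℝ) + 3) ≠ 0 := by positivity
    have hF : ((2:ℝ) * k + 2) / (2 * k + 1) * ((2 * k + 2) / (2 * k + 3))
        * ((2 * (((k+1) : ℕ) : ℝ) + 1) * (cb (k+1)) ^ 2) = (2 * (k:ℝ) + 1) * (cb k) ^ 2 := by
      rw [cb_succ]
      push_cast
      field_simp
      ring
    rw [mul_assoc, hF]
    exact ih

lemma tendsto_main :
    Tendsto (fun N : ℕ => (4 * (N:ℝ) + 1) * (cb N) ^ 2) atTop (𝓝 (4 / Real.pi)) := by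
  have hW := Real.tendsto_prod_pi_div_two
  have hpi : (Real.pi / 2) ≠ 0 := by positivity
  have hinv : Tendsto (fun k : ℕ =>
      (∏ i ∈ range k, ((2 : ℝ) * i + 2) / (2 * i + 1) * ((2 * i + 2) / (2 * i + 3)))⁻¹)
      atTop (𝓝 (Real.pi / 2)⁻¹) := hW.inv₀ hpi
  have heq : ∀ k : ℕ, (∏ i ∈ range k, ((2 : ℝ) * i + 2) / (2 * i + 1) * ((2 * i + 2) / (2 * i + 3)))⁻¹
      = (2 * (k:ℝ) + 1) * (cb k) ^ 2 :=
    fun k => inv_eq_of_mul_eq_one_right (wallis_inv k)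
  have h1 : Tendsto (fun k : ℕ => (2 * (k:ℝ) + 1) * (cb k) ^ 2) atTop (𝓝 (2 / Real.pi)) := by
    have hh : (Real.pi / 2)⁻¹ = 2 / Real.pi := by rw [inv_div]
    rw [← hh]
    exact hinv.congr heq
  have h2 : Tendsto (fun k : ℕ => (4 * (k:ℝ) + 1) / (2 * k + 1)) atTop (𝓝 2) := by
    have hz : Tendsto (fun k : ℕ => (2 * (k:ℝ) + 1)⁻¹) atTop (𝓝 0) := by
      apply Tendsto.inv_tendsto_atTop
      apply tendsto_atTop_mono (f := fun n : ℕ => (n:ℝ))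
      · intro n; have := Nat.cast_nonneg (α := ℝ) n; linarith
      · exact tendsto_natCast_atTop_atTop
    have h' : Tendsto (fun k : ℕ => 2 - (2 * (k:ℝ) + 1)⁻¹) atTop (𝓝 (2 - 0)) :=
      tendsto_const_nhds.sub hz
    rw [sub_zero] at h'
    refine h'.congr fun k => ?_
    have hk : (2 * (k:ℝ) + 1) ≠ 0 := by positivity
    field_simp
    ring
  have h3 := h2.mul h1
  have heq2 : (2 : ℝ) * (2 / Real.pi) = 4 / Real.pi := by ring
  rw [heq2] at h3
  refine h3.congr fun k => ?_
  have hk : (2 * (k:ℝ) + 1) ≠ 0 := by positivity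
  field_simp

theorem series_value_at_one :
    ∑' n : ℕ, ((1 / (2 * (n : ℝ) - 1)) * (1 / 4 ^ n) * (Nat.choose (2 * n) n)) ^ 2 =
      4 / Real.pi := by
  have hnn : ∀ n : ℕ, 0 ≤ ((1 / (2 * (n : ℝ) - 1)) * (1 / 4 ^ n) * (Nat.choose (2 * n) n)) ^ 2 :=
    fun n => sq_nonneg _
  have hs : HasSum (fun n : ℕ => ((1 / (2 * (n : ℝ) - 1)) * (1 / 4 ^ n) * (Nat.choose (2 * n) n)) ^ 2)
      (4 / Real.pi) := by
    rw [hasSum_iff_tendsto_nat_of_nonneg hnn]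
    rw [← Filter.tendsto_add_atTop_iff_nat 1]
    have h : (fun n : ℕ => ∑ i ∈ range (n + 1),
        ((1 / (2 * (i : ℝ) - 1)) * (1 / 4 ^ i) * (Nat.choose (2 * i) i)) ^ 2)
        = fun n : ℕ => (4 * (n:ℝ) + 1) * (cb n) ^ 2 := funext partial_sum
    rw [h]
    exact tendsto_main
  exact hs.tsum_eq
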